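/- Let α = e(a), γ = e(c) with 0 ≤ a < c < 1 and c − a < 1/k for a positive integer k, and let β be on the unit circle. Then β^k lies in the orientation interval (α^k, γ^k) if and only if β ∈ (ζ_k^s·α, ζ_k^s·γ) for some integer s, where ζ_k = e(1/k) is a primitive k-th root of unity. -/

import Mathlib

noncomputable def uexp (x : ℝ) : ℂ := Complex.exp (2 * Real.pi * Complex.I * x)

def Orient (α β γ : ℂ) : Prop :=
  ∃ x y z : ℝ, x < y ∧ y < z ∧ z - x < 1 ∧ α = uexp x ∧ β = uexp y ∧ γ = uexp z

def arc (α β : ℂ) : Set ℂ := {γ | Orient α γ β}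

lemma uexp_eq_iff (x y : ℝ) : uexp x = uexp y ↔ ∃ n : ℤ, x = y + n := by
  unfold uexp
  rw [Complex.exp_eq_exp_iff_exists_int]
  have hne : (2 * (Real.pi : ℂ) * Complex.I) ≠ 0 := by
    simp [Real.pi_ne_zero, Complex.I_ne_zero]
  constructor
  · rintro ⟨n, h⟩
    refine ⟨n, ?_⟩
    have h' : 2 * (Real.pi : ℂ) * Complex.I * x = 2 * (Real.pi : ℂ) * Complex.I * ((y : ℂ) + n) := by
      rw [h]; ring
    have h2 := mul_left_cancel₀ hne h'
    have : (x : ℂ) = ((y + n : ℝ) : ℂ) := by push_cast; exact h2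
    exact_mod_cast this
  · rintro ⟨n, h⟩
    refine ⟨n, ?_⟩
    rw [h]; push_cast; ring

lemma uexp_pow (x : ℝ) (k : ℕ) : uexp x ^ k = uexp (k * x) := by
  unfold uexp
  rw [← Complex.exp_nat_mul]
  congr 1
  push_cast; ring

lemma uexp_zpow (x : ℝ) (s : ℤ) : uexp x ^ s = uexp (s * x) := by
  unfold uexp
  rw [← Complex.exp_int_mul]
  congr 1
  push_cast; ring

lemma uexp_add (x y : ℝ) : uexp (x + y) = uexp x * uexp y := by
  unfold uexp
  rw [← Complex.exp_add]
  congr 1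
  push_cast; ring

lemma mem_arc_iff (a c b : ℝ) (h1 : a < c) (h2 : c - a < 1) :
    uexp b ∈ arc (uexp a) (uexp c) ↔ ∃ n : ℤ, a < b + n ∧ b + n < c := by
  constructor
  · rintro ⟨x, y, z, hxy, hyz, hzx, hxa, hyb, hzc⟩
    obtain ⟨p, hp⟩ := (uexp_eq_iff a x).mp hxa
    obtain ⟨q, hq⟩ := (uexp_eq_iff b y).mp hyb
    obtain ⟨r, hr⟩ := (uexp_eq_iff c z).mp hzc
    have hpr : p = r := by
      have h3 : ((p : ℝ) - r) < 1 := by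
        have : z - x < 1 := hzx
        nlinarith [h1]
      have h4 : (-1 : ℝ) < (p : ℝ) - r := by
        have hxz : x < z := lt_trans hxy hyz
        nlinarith [h2]
      have h3' : (p : ℤ) - r < 1 := by exact_mod_cast (by push_cast; linarith : ((p - r : ℤ) : ℝ) < 1)
      have h4' : (-1 : ℤ) < p - r := by exact_mod_cast (by push_cast; linarith : (-1 : ℝ) < ((p - r : ℤ) : ℝ))
      omega
    refine ⟨p - q, ?_, ?_⟩
    · have : x < y := hxy
      push_cast; linarith
    · have : y < z := hyz
      subst hpr
      push_cast; linarith
  · rintro ⟨n, hn1, hn2⟩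
    refine ⟨a, b + n, c, hn1, hn2, by linarith, rfl, ?_, rfl⟩
    rw [uexp_eq_iff]
    exact ⟨-n, by push_cast; ring⟩

theorem kth_power_arc (k : ℕ) (hk : 0 < k) (a c : ℝ) (ha : 0 ≤ a) (hac : a < c) (hc : c < 1)
    (hlen : c - a < 1 / k) (β : ℂ) (hβ : ‖β‖ = 1) :
    β ^ k ∈ arc (uexp a ^ k) (uexp c ^ k) ↔
      ∃ s : ℤ, β ∈ arc (uexp (1 / k) ^ s * uexp a) (uexp (1 / k) ^ s * uexp c) := by
  have hk' : (0 : ℝ) < k := by exact_mod_cast hk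
  have hkc : c - a < 1 := lt_of_lt_of_le hlen (by
    rw [div_le_one hk']; exact_mod_cast hk)
  -- write β = uexp b
  have hβeq : β = uexp (β.arg / (2 * Real.pi)) := by
    have h1 : Complex.exp (β.arg * Complex.I) = β := by
      have := Complex.norm_mul_exp_arg_mul_I β
      rw [hβ] at this
      simpa using this
    conv_lhs => rw [← h1]
    unfold uexp
    congr 1
    have hπ : (Real.pi : ℂ) ≠ 0 := by exact_mod_cast Real.pi_ne_zero
    push_cast
    field_simp
  set b := β.arg / (2 * Real.pi) with hb
  rw [hβeq, uexp_pow, uexp_pow, uexp_pow]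
  rw [mem_arc_iff (k * a) (k * c) (k * b)
    (by nlinarith) (by rw [lt_div_iff₀ hk'] at hlen; nlinarith)]
  have hRHS : ∀ s : ℤ, uexp (1 / k) ^ s * uexp a = uexp (s / k + a) ∧
      uexp (1 / k) ^ s * uexp c = uexp (s / k + c) := by
    intro s
    constructor <;> · rw [uexp_zpow, ← uexp_add]; congr 1; field_simp
  constructor
  · rintro ⟨n, hn1, hn2⟩
    refine ⟨-n, ?_⟩
    rw [(hRHS (-n)).1, (hRHS (-n)).2,
      mem_arc_iff _ _ _ (by push_cast; linarith) (by push_cast; linarith)]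
    refine ⟨0, ?_, ?_⟩ <;>
    · push_cast
      rw [add_zero, ← mul_lt_mul_iff_right₀ hk']
      field_simp
      linarith
  · rintro ⟨s, hs⟩
    rw [(hRHS s).1, (hRHS s).2,
      mem_arc_iff _ _ _ (by linarith) (by linarith)] at hs
    obtain ⟨n, hn1, hn2⟩ := hs
    have h1' := (mul_lt_mul_iff_right₀ hk').mpr hn1
    have h2' := (mul_lt_mul_iff_right₀ hk').mpr hn2
    field_simp at h1' h2'
    refine ⟨k * n - s, ?_, ?_⟩ <;>
    · push_cast
      push_cast at h1' h2'
      linarith
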